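/- Let p ≥ 2 and let f : ℝ^d → ℝ be convex, differentiable, and L-smooth w.r.t. ‖·‖_p, and let (x_t), (y_t), (v_t), (a_t), (A_t), (ρ_t), (ψ_t) be HASD iterates started at x_0 ∈ ℝ^d. Then for every t ≥ 0, A_t^{1/2} ≥ (1/(18 L^{1/2})) ∑_{i=0}^{t-1} ‖∇f(x_{i+1})‖_{p*} / ‖∇f(x_{i+1})‖_2. -/

import Mathlib

open scoped BigOperators
open scoped InnerProductSpace

/-- The `ℓ_p` "norm" on `ℝ^d` for a real exponent `p`. -/
noncomputable def pnorm (p : ℝ) {d : ℕ} (x : EuclideanSpace ℝ (Fin d)) : ℝ :=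
  (∑ i, |x i| ^ p) ^ (1 / p)

/-- The dual exponent `p* = p/(p-1)`, so that `1/p + 1/p* = 1`. -/
noncomputable def dualExp (p : ℝ) : ℝ := p / (p - 1)

/-- The iterates of the Hyper-Accelerated Steepest Descent (HASD) method for
`f : ℝ^d → ℝ` differentiable, smoothness constant `L > 0`, started at `x0`. -/
structure HASD (d : ℕ) (p L : ℝ) (f : EuclideanSpace ℝ (Fin d) → ℝ)
    (x0 : EuclideanSpace ℝ (Fin d)) where
  x : ℕ → EuclideanSpace ℝ (Fin d)
  y : ℕ → EuclideanSpace ℝ (Fin d)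
  v : ℕ → EuclideanSpace ℝ (Fin d)
  a : ℕ → ℝ
  A : ℕ → ℝ
  ρ : ℕ → ℝ
  ψ : ℕ → EuclideanSpace ℝ (Fin d) → ℝ
  x_zero : x 0 = x0
  A_zero : A 0 = 0
  ψ_zero : ∀ z, ψ 0 z = (1 / 2) * pnorm 2 (z - x0) ^ 2
  /-- `v t` minimizes `ψ t` over `ℝ^d`. -/
  v_min : ∀ t z, ψ t (v t) ≤ ψ t z
  grad_ne : ∀ t : ℕ, gradient f (x (t + 1)) ≠ 0
  ρ_pos : ∀ t : ℕ, 0 < ρ t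
  ρ_lb : ∀ t : ℕ, (1 / 2) * (pnorm 2 (gradient f (x (t + 1))) ^ 2 /
      pnorm (dualExp p) (gradient f (x (t + 1))) ^ 2) ≤ ρ t
  ρ_ub : ∀ t : ℕ, ρ t ≤ 2 * (pnorm 2 (gradient f (x (t + 1))) ^ 2 /
      pnorm (dualExp p) (gradient f (x (t + 1))) ^ 2)
  a_pos : ∀ t : ℕ, 0 < a (t + 1)
  a_eq : ∀ t : ℕ, a (t + 1) ^ 2 = (A t + a (t + 1)) / (18 * L * ρ t)
  A_succ : ∀ t : ℕ, A (t + 1) = A t + a (t + 1)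
  y_def : ∀ t : ℕ, y t = (1 - a (t + 1) / A (t + 1)) • x t + (a (t + 1) / A (t + 1)) • v t
  /-- `x (t+1)` minimizes `z ↦ ⟪∇f(y t), z - y t⟫ + L ‖z - y t‖_p²` over `ℝ^d`. -/
  x_min : ∀ (t : ℕ) (z : EuclideanSpace ℝ (Fin d)),
      ⟪gradient f (y t), x (t + 1) - y t⟫_ℝ + L * pnorm p (x (t + 1) - y t) ^ 2 ≤
      ⟪gradient f (y t), z - y t⟫_ℝ + L * pnorm p (z - y t) ^ 2
  ψ_succ : ∀ (t : ℕ) (z : EuclideanSpace ℝ (Fin d)),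
      ψ (t + 1) z = ψ t z + a (t + 1) * (f (x (t + 1)) + ⟪gradient f (x (t + 1)), z - x (t + 1)⟫_ℝ)

lemma pnorm_pos' {d : ℕ} (q : ℝ) (hq : 0 < q) (x : EuclideanSpace ℝ (Fin d))
    (hx : x ≠ 0) : 0 < pnorm q x := by
  obtain ⟨i, hi⟩ : ∃ i, x i ≠ 0 := by
    by_contra hc
    push_neg at hc
    exact hx (by ext i; simpa using hc i)
  unfold pnorm
  apply Real.rpow_pos_of_pos
  refine Finset.sum_pos' (fun j _ => Real.rpow_nonneg (abs_nonneg _) q) ?_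
  exact ⟨i, Finset.mem_univ i, Real.rpow_pos_of_pos (abs_pos.2 hi) q⟩

set_option maxHeartbeats 1000000 in
theorem stmt4 {d : ℕ} (p L : ℝ) (hp : 2 ≤ p) (hL : 0 < L)
    (f : EuclideanSpace ℝ (Fin d) → ℝ) (hconv : ConvexOn ℝ Set.univ f)
    (hf : Differentiable ℝ f)
    (hsmooth : ∀ x y : EuclideanSpace ℝ (Fin d),
      pnorm (dualExp p) (gradient f y - gradient f x) ≤ L * pnorm p (y - x))
    (x0 : EuclideanSpace ℝ (Fin d)) (h : HASD d p L f x0) :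
    ∀ t : ℕ,
      Real.sqrt (h.A t) ≥ (1 / (18 * Real.sqrt L)) * ∑ i ∈ Finset.range t,
        pnorm (dualExp p) (gradient f (h.x (i + 1))) / pnorm 2 (gradient f (h.x (i + 1))) := by
  have hsL : 0 < Real.sqrt L := Real.sqrt_pos.2 hL
  have hq : 0 < dualExp p := div_pos (by linarith) (by linarith)
  have hAnn : ∀ t, 0 ≤ h.A t := by
    intro t
    induction t with
    | zero => rw [h.A_zero]
    | succ n ih => rw [h.A_succ]; have := h.a_pos n; linarith
  have key : ∀ t, Real.sqrt (h.A t) + (1/(18*Real.sqrt L)) *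
      (pnorm (dualExp p) (gradient f (h.x (t+1))) / pnorm 2 (gradient f (h.x (t+1)))) ≤
      Real.sqrt (h.A (t+1)) := by
    intro t
    set g := gradient f (h.x (t+1)) with hg_def
    have hg := h.grad_ne t
    have hn2 : 0 < pnorm 2 g := pnorm_pos' 2 two_pos g hg
    have hnq : 0 < pnorm (dualExp p) g := pnorm_pos' _ hq g hg
    have hρ := h.ρ_pos t
    have hub := h.ρ_ub t
    rw [show (2:ℝ) * (pnorm 2 g ^ 2 / pnorm (dualExp p) g ^ 2)
        = (2 * pnorm 2 g ^ 2) / pnorm (dualExp p) g ^ 2 by ring,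
      le_div_iff₀ (by positivity)] at hub
    set S := Real.sqrt (h.A t) with hS_def
    set S1 := Real.sqrt (h.A (t+1)) with hS1_def
    have hA1 : 0 < h.A (t+1) := by
      rw [h.A_succ]; have := h.a_pos t; have := hAnn t; linarith
    have hS1 : 0 < S1 := Real.sqrt_pos.2 hA1
    have hS : 0 ≤ S := Real.sqrt_nonneg _
    have hSsq : S^2 = h.A t := Real.sq_sqrt (hAnn t)
    have hS1sq : S1^2 = h.A (t+1) := Real.sq_sqrt hA1.le
    set K := Real.sqrt (18*L*h.ρ t) with hK_def
    have hKpos : 0 < K := Real.sqrt_pos.2 (by positivity)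
    have hKsq : K^2 = 18*L*h.ρ t := Real.sq_sqrt (by positivity)
    have ha := h.a_pos t
    have haK : h.a (t+1) * K = S1 := by
      have h1 : (h.a (t+1) * K)^2 = S1^2 := by
        rw [mul_pow, hKsq, hS1sq, h.a_eq t, h.A_succ,
          div_mul_cancel₀ _ (by positivity : (18*L*h.ρ t) ≠ 0)]
      have h2 := congrArg Real.sqrt h1
      rwa [Real.sqrt_sq (by positivity), Real.sqrt_sq hS1.le] at h2
    have hrec : S1^2 * K = S^2 * K + S1 := by
      rw [hS1sq, hSsq, h.A_succ, ← haK]; ring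
    have hS1geS : S ≤ S1 := by
      apply Real.sqrt_le_sqrt
      rw [h.A_succ]; linarith
    have hgap : 1/K ≤ 2*(S1 - S) := by
      rw [div_le_iff₀ hKpos]
      nlinarith [mul_pos hS1 hKpos, mul_nonneg (mul_nonneg
        (sub_nonneg.2 hS1geS) (sub_nonneg.2 hS1geS)) hKpos.le]
    have hL2 : Real.sqrt L ^ 2 = L := Real.sq_sqrt hL.le
    have h1 : K * pnorm (dualExp p) g ≤ 6 * Real.sqrt L * pnorm 2 g := by
      have hsq : (K * pnorm (dualExp p) g)^2 ≤ (6 * Real.sqrt L * pnorm 2 g)^2 := by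
        nlinarith [hub, hKsq, hL2, hL]
      have h2 := Real.sqrt_le_sqrt hsq
      rwa [Real.sqrt_sq (by positivity), Real.sqrt_sq (by positivity)] at h2
    have hc : 1/(18*Real.sqrt L) * (pnorm (dualExp p) g / pnorm 2 g) ≤ 1/(2*K) := by
      rw [div_mul_div_comm, div_le_div_iff₀ (by positivity) (by positivity)]
      nlinarith [h1, mul_nonneg hsL.le hn2.le]
    have hhalf : 1/(2*K) = (1/K)/2 := by ring
    linarith
  intro t
  induction t with
  | zero => simp [h.A_zero]
  | succ n ih =>
    rw [ge_iff_le, Finset.sum_range_succ, mul_add]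
    have hk := key n
    linarith [ih]
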